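/- Main correctness of the PMLG gadget construction: for every deMorgan formula F over variable sets partitioned into A-variables and B-variables, and every pair of partial assignments (a, b), the recursively constructed pattern P_a(F) is matched by some source-to-sink path of the recursively constructed graph G_b(F) if and only if F(a, b) = 1. Moreover P_a(F) depends only on a and the formula, and G_b(F) depends only on b and the formula. -/

import Mathlib

/-- A vertex-labeled directed graph over alphabet `{0,1}` (Bool). -/
structure LGraph (V : Type) where
  edge : V → V → Prop
  label : V → Bool

namespace LGraph
variable {V : Type}

/-- A (nonempty) directed path: consecutive vertices joined by edges. -/
def isPath (G : LGraph V) (p : List V) : Prop := p ≠ [] ∧ p.Chain' G.edge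

/-- The label string of a path. -/
def labels (G : LGraph V) (p : List V) : List Bool := p.map G.label

/-- `v` has no incoming edge. -/
def noIn (G : LGraph V) (v : V) : Prop := ∀ u, ¬ G.edge u v

/-- `v` has no outgoing edge. -/
def noOut (G : LGraph V) (v : V) : Prop := ∀ u, ¬ G.edge v u

/-- A maximal path: starts at a vertex with no incoming edges and
ends at a vertex with no outgoing edges. -/
def maxPath (G : LGraph V) (p : List V) : Prop :=
  G.isPath p ∧ (∀ v, p.head? = some v → G.noIn v) ∧ (∀ v, p.getLast? = some v → G.noOut v)

/-- The string `P` is matched by some path from `s` to `t` in `G`. -/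
def matches' (G : LGraph V) (s t : V) (P : List Bool) : Prop :=
  ∃ p, G.isPath p ∧ p.head? = some s ∧ p.getLast? = some t ∧ G.labels p = P

end LGraph

/-- Vertices of the universal graph `U(k+2)`: a source, `k` levels each
holding a `0`-vertex and a `1`-vertex, and a sink. -/
abbrev UVert (k : ℕ) : Type := Unit ⊕ ((Fin k × Bool) ⊕ Unit)

/-- The source of the universal graph. -/
def Usrc (k : ℕ) : UVert k := Sum.inl ()

/-- The sink of the universal graph. -/
def Usnk (k : ℕ) : UVert k := Sum.inr (Sum.inr ())

/-- Edges of the universal graph: source to both vertices of level 0,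
each vertex of a level to both vertices of the next level, each vertex of
the last level to the sink (and source to sink directly when `k = 0`). -/
def Uedge (k : ℕ) : UVert k → UVert k → Prop := fun u v =>
  match u, v with
  | Sum.inl _, Sum.inr (Sum.inl p) => p.1.val = 0
  | Sum.inl _, Sum.inr (Sum.inr _) => k = 0
  | Sum.inr (Sum.inl p), Sum.inr (Sum.inl q) => q.1.val = p.1.val + 1
  | Sum.inr (Sum.inl p), Sum.inr (Sum.inr _) => p.1.val + 1 = k
  | _, _ => False

/-- Labels of the universal graph: source and sink are labeled `1`,
each level has one vertex labeled `0` and one labeled `1`. -/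
def Ulabel (k : ℕ) : UVert k → Bool := fun v =>
  match v with
  | Sum.inr (Sum.inl p) => p.2
  | _ => true

/-- The universal graph with `k` intermediate levels, i.e. `U(k+2)`. -/
def UGraph (k : ℕ) : LGraph (UVert k) := ⟨Uedge k, Ulabel k⟩

namespace LGraph
variable {V1 V2 V : Type}

/-- Series composition: `G1` followed by `G2`, adding an edge from `t1`
(the sink of `G1`) to `s2` (the source of `G2`). -/
def series (G1 : LGraph V1) (G2 : LGraph V2) (t1 : V1) (s2 : V2) : LGraph (V1 ⊕ V2) where
  edge u v :=
    match u, v with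
    | Sum.inl a, Sum.inl b => G1.edge a b
    | Sum.inl a, Sum.inr b => a = t1 ∧ b = s2
    | Sum.inr a, Sum.inr b => G2.edge a b
    | Sum.inr _, Sum.inl _ => False
  label := Sum.elim G1.label G2.label

/-- Wrapping: add a new source labeled `1` with an edge to `s` and a new
sink labeled `1` with an edge from `t`. -/
def wrap (G : LGraph V) (s t : V) : LGraph (Unit ⊕ V ⊕ Unit) where
  edge u v :=
    match u, v with
    | Sum.inl _, Sum.inr (Sum.inl b) => b = s
    | Sum.inr (Sum.inl a), Sum.inr (Sum.inl b) => G.edge a b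
    | Sum.inr (Sum.inl a), Sum.inr (Sum.inr _) => a = t
    | _, _ => False
  label := Sum.elim (fun _ => true) (Sum.elim G.label (fun _ => true))

/-- Parallel composition with wrapping: a new source labeled `1` branching
to the sources `s1` of `G1` and `s2` of `G2`, and the sinks `t1`, `t2`
both leading to a new sink labeled `1`. -/
def parwrap (G1 : LGraph V1) (G2 : LGraph V2) (s1 t1 : V1) (s2 t2 : V2) :
    LGraph (Unit ⊕ (V1 ⊕ V2) ⊕ Unit) where
  edge u v :=
    match u, v with
    | Sum.inl _, Sum.inr (Sum.inl (Sum.inl b)) => b = s1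
    | Sum.inl _, Sum.inr (Sum.inl (Sum.inr b)) => b = s2
    | Sum.inr (Sum.inl (Sum.inl a)), Sum.inr (Sum.inl (Sum.inl b)) => G1.edge a b
    | Sum.inr (Sum.inl (Sum.inr a)), Sum.inr (Sum.inl (Sum.inr b)) => G2.edge a b
    | Sum.inr (Sum.inl (Sum.inl a)), Sum.inr (Sum.inr _) => a = t1
    | Sum.inr (Sum.inl (Sum.inr a)), Sum.inr (Sum.inr _) => a = t2
    | _, _ => False
  label := Sum.elim (fun _ => true) (Sum.elim (Sum.elim G1.label G2.label) (fun _ => true))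

end LGraph
/-- A read-once deMorgan formula gate over `m` A-variables and `m`
B-variables: leaves read an A-variable or a B-variable, internal gates are
∧ or ∨. -/
inductive Gate (m : ℕ) : Type where
  | avar (i : Fin m) : Gate m
  | bvar (j : Fin m) : Gate m
  | and (g1 g2 : Gate m) : Gate m
  | or (g1 g2 : Gate m) : Gate m

/-- Size of (the subformula rooted at) a gate: its number of leaves. -/
def Gate.size {m : ℕ} : Gate m → ℕ
  | .avar _ => 1
  | .bvar _ => 1
  | .and g1 g2 => g1.size + g2.size
  | .or g1 g2 => g1.size + g2.size

/-- Boolean evaluation under the combined assignment `(a, b)`. -/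
def Gate.eval {m : ℕ} (a b : Fin m → Bool) : Gate m → Bool
  | .avar i => a i
  | .bvar j => b j
  | .and g1 g2 => g1.eval a b && g2.eval a b
  | .or g1 g2 => g1.eval a b || g2.eval a b

/-- The pattern `P_a(g)` of the PMLG construction: `1aᵢ1` for an A-variable
input gate, `111` for a B-variable input gate, and `1·P₁·P₂·1` for an
internal gate. -/
def Gate.pat {m : ℕ} (a : Fin m → Bool) : Gate m → List Bool
  | .avar i => [true, a i, true]
  | .bvar _ => [true, true, true]
  | .and g1 g2 => true :: (g1.pat a ++ g2.pat a ++ [true])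
  | .or g1 g2 => true :: (g1.pat a ++ g2.pat a ++ [true])

/-- The pattern length: `|P| = 3` for leaves, `|P₁| + |P₂| + 2` for gates. -/
def Gate.plen {m : ℕ} : Gate m → ℕ
  | .avar _ => 3
  | .bvar _ => 3
  | .and g1 g2 => g1.plen + g2.plen + 2
  | .or g1 g2 => g1.plen + g2.plen + 2

/-- The directed path graph on three vertices with labels `l0, l1, l2`. -/
def path3 (l0 l1 l2 : Bool) : LGraph (Fin 3) where
  edge u v := v.val = u.val + 1
  label v := if v.val = 0 then l0 else if v.val = 1 then l1 else l2

/-- A labeled graph bundled with a designated source and sink vertex. -/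
structure BG : Type 1 where
  V : Type
  G : LGraph V
  src : V
  snk : V

/-- The recursive PMLG graph construction `G_b(g)` (depending only on the
B-assignment `b` and the formula): input gates yield 3-vertex paths
(labeled `1,1,1` for A-variables and `1,b_j,1` for B-variables); an AND
gate puts the two subgraphs in series between a new source and sink
labeled `1`; an OR gate branches from a new source labeled `1` to
(`G₁` then `U(|P₂|)`) and to (`U(|P₁|)` then `G₂`), meeting at a new sink
labeled `1`. -/
def build {m : ℕ} (b : Fin m → Bool) : Gate m → BG
  | .avar _ => ⟨Fin 3, path3 true true true, 0, 2⟩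
  | .bvar j => ⟨Fin 3, path3 true (b j) true, 0, 2⟩
  | .and g1 g2 =>
      let B1 := build b g1
      let B2 := build b g2
      ⟨Unit ⊕ (B1.V ⊕ B2.V) ⊕ Unit,
        (B1.G.series B2.G B1.snk B2.src).wrap (Sum.inl B1.src) (Sum.inr B2.snk),
        Sum.inl (), Sum.inr (Sum.inr ())⟩
  | .or g1 g2 =>
      let B1 := build b g1
      let B2 := build b g2
      let k1 := g1.plen - 2
      let k2 := g2.plen - 2
      ⟨Unit ⊕ ((B1.V ⊕ UVert k2) ⊕ (UVert k1 ⊕ B2.V)) ⊕ Unit,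
        (B1.G.series (UGraph k2) B1.snk (Usrc k2)).parwrap
          ((UGraph k1).series B2.G (Usnk k1) B2.src)
          (Sum.inl B1.src) (Sum.inr (Usnk k2)) (Sum.inl (Usrc k1)) (Sum.inr B2.snk),
        Sum.inl (), Sum.inr (Sum.inr ())⟩

section Aux

variable {V W V1 V2 : Type}

@[simp] lemma chain'_iff_isChain {R : W → W → Prop} {l : List W} :
    l.Chain' R ↔ l.IsChain R := Iff.rfl

/-- A chain starting at a vertex with no outgoing edges is a singleton. -/
lemma chain_noOut {R : W → W → Prop} {p : List W} {v : W} (hc : p.Chain' R)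
    (hh : p.head? = some v) (hv : ∀ w, ¬ R v w) : p = [v] := by
  cases p with
  | nil => simp at hh
  | cons x r =>
    simp at hh; subst hh
    cases r with
    | nil => rfl
    | cons y r' => exact absurd (List.isChain_cons_cons.mp hc).1 (hv y)

lemma getLast?_cons_ne {α : Type*} (x : α) {l : List α} (h : l ≠ []) :
    (x :: l).getLast? = l.getLast? := by
  cases l with
  | nil => exact absurd rfl h
  | cons y r => rw [List.getLast?_cons_cons]

/-- Confinement: if every edge out of the image of `f` stays in the image
(reflecting an edge of `G`), then a chain starting in the image is the image
of a chain of `G`. -/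
lemma confine {H : LGraph W} {G : LGraph V} {f : V → W}
    (h : ∀ a w, H.edge (f a) w → ∃ b, w = f b ∧ G.edge a b) :
    ∀ (p : List W), ∀ a : V, p.Chain' H.edge → p.head? = some (f a) →
      ∃ q : List V, p = q.map f ∧ q.Chain' G.edge ∧ q.head? = some a := by
  intro p
  induction p with
  | nil => intro a _ hh; simp at hh
  | cons x r ih =>
    intro a hc hh
    simp at hh; subst hh
    cases r with
    | nil => exact ⟨[a], by simp, by simp, rfl⟩
    | cons y r' =>
      obtain ⟨he, hc'⟩ := List.isChain_cons_cons.mp hc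
      obtain ⟨b, rfl, hab⟩ := h a y he
      obtain ⟨q, hq, hqc, hqh⟩ := ih b hc' (by simp)
      refine ⟨a :: q, by simp [hq], ?_, rfl⟩
      cases q with
      | nil => simp at hqh
      | cons c q' =>
        simp at hqh; subst hqh
        exact List.isChain_cons_cons.mpr ⟨hab, hqc⟩

/-- Confinement with a single exit: every edge out of the image of `f`
either stays in the image or goes from `f t` to the exit vertex `e`.  A chain
starting in the image either stays in the image, or splits at the exit. -/
lemma confine_exit {H : LGraph W} {G : LGraph V} {f : V → W} {t : V} {e : W}
    (h : ∀ a w, H.edge (f a) w → (∃ b, w = f b ∧ G.edge a b) ∨ (w = e ∧ a = t)) :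
    ∀ (p : List W), ∀ a : V, p.Chain' H.edge → p.head? = some (f a) →
      (∃ q : List V, p = q.map f ∧ q.Chain' G.edge ∧ q.head? = some a) ∨
      (∃ (q : List V) (rest : List W), p = q.map f ++ rest ∧ q.Chain' G.edge ∧ q.head? = some a ∧
        q.getLast? = some t ∧ rest.Chain' H.edge ∧ rest.head? = some e) := by
  intro p
  induction p with
  | nil => intro a _ hh; simp at hh
  | cons x r ih =>
    intro a hc hh
    simp at hh; subst hh
    cases r with
    | nil => exact Or.inl ⟨[a], by simp, by simp, rfl⟩
    | cons y r' =>
      obtain ⟨he, hc'⟩ := List.isChain_cons_cons.mp hc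
      rcases h a y he with ⟨b, rfl, hab⟩ | ⟨rfl, rfl⟩
      · rcases ih b hc' (by simp) with ⟨q, hq, hqc, hqh⟩ | ⟨q, rest, hq, hqc, hqh, hql, hrc, hrh⟩
        · refine Or.inl ⟨a :: q, by simp [hq], ?_, rfl⟩
          cases q with
          | nil => simp at hqh
          | cons c q' =>
            simp at hqh; subst hqh
            exact List.isChain_cons_cons.mpr ⟨hab, hqc⟩
        · refine Or.inr ⟨a :: q, rest, by simp [hq], ?_, rfl, ?_, hrc, hrh⟩
          · cases q with
            | nil => simp at hqh
            | cons c q' =>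
              simp at hqh; subst hqh
              exact List.isChain_cons_cons.mpr ⟨hab, hqc⟩
          · cases q with
            | nil => simp at hqh
            | cons c q' => rw [List.getLast?_cons_cons]; exact hql
      · exact Or.inr ⟨[a], y :: r', by simp, by simp, rfl, by simp, hc', rfl⟩

/-- Characterization of matched strings for the series composition. -/
lemma series_matches (G1 : LGraph V1) (G2 : LGraph V2) (s1 t1 : V1) (s2 t2 : V2)
    (P : List Bool) :
    (G1.series G2 t1 s2).matches' (Sum.inl s1) (Sum.inr t2) P ↔
      ∃ P1 P2, P = P1 ++ P2 ∧ G1.matches' s1 t1 P1 ∧ G2.matches' s2 t2 P2 := by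
  constructor
  · rintro ⟨p, ⟨-, hc⟩, hh, hl, rfl⟩
    have hconf : ∀ (a : V1) (w : V1 ⊕ V2), (G1.series G2 t1 s2).edge (Sum.inl a) w →
        (∃ b, w = Sum.inl b ∧ G1.edge a b) ∨ (w = Sum.inr s2 ∧ a = t1) := by
      rintro a (b | b) he
      · exact Or.inl ⟨b, rfl, he⟩
      · obtain ⟨h1, h2⟩ : a = t1 ∧ b = s2 := he
        exact Or.inr ⟨by rw [h2], h1⟩
    rcases confine_exit hconf p s1 hc hh with ⟨q, rfl, hqc, hqh⟩ |
        ⟨q, rest, rfl, hqc, hqh, hql, hrc, hrh⟩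
    · rw [List.getLast?_map] at hl
      rcases q.getLast? with _ | c <;> simp_all
    · have hconf2 : ∀ (a : V2) (w : V1 ⊕ V2), (G1.series G2 t1 s2).edge (Sum.inr a) w →
          ∃ b, w = Sum.inr b ∧ G2.edge a b := by
        rintro a (b | b) he
        · exact absurd he id
        · exact ⟨b, rfl, he⟩
      obtain ⟨r, rfl, hrc', hrh'⟩ := confine hconf2 rest s2 hrc hrh
      have hrne : (r.map Sum.inr : List (V1 ⊕ V2)) ≠ [] := by
        rcases r with _ | _ <;> simp_all
      rw [List.getLast?_append, List.getLast?_map] at hl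
      have hrl : r.getLast? = some t2 := by
        rcases hg : r.getLast? with _ | c
        · simp [hg] at hrne; simp_all
        · rw [hg] at hl; simpa using hl
      refine ⟨G1.labels q, G2.labels r, ?_, ⟨q, ⟨?_, hqc⟩, hqh, hql, rfl⟩,
        ⟨r, ⟨?_, hrc'⟩, hrh', hrl, rfl⟩⟩
      · simp [LGraph.labels, LGraph.series]
      · rintro rfl; simp at hqh
      · rintro rfl; simp at hrh'
  · rintro ⟨P1, P2, rfl, ⟨p1, ⟨hp1ne, hp1c⟩, hp1h, hp1l, rfl⟩, ⟨p2, ⟨hp2ne, hp2c⟩, hp2h, hp2l, rfl⟩⟩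
    refine ⟨p1.map Sum.inl ++ p2.map Sum.inr, ⟨by simp [hp1ne], ?_⟩, ?_, ?_, ?_⟩
    · rw [chain'_iff_isChain, List.isChain_append]
      refine ⟨?_, ?_, ?_⟩
      · rw [List.isChain_map]; exact hp1c
      · rw [List.isChain_map]; exact hp2c
      · intro x hx y hy
        rw [List.getLast?_map, hp1l] at hx
        rw [List.head?_map, hp2h] at hy
        simp at hx hy; subst hx; subst hy
        exact ⟨rfl, rfl⟩
    · rw [List.head?_append, List.head?_map, hp1h]; rfl
    · have : (p2.map Sum.inr : List (V1 ⊕ V2)) ≠ [] := by simpa using hp2ne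
      rw [List.getLast?_append, List.getLast?_map, hp2l]; rfl
    · simp [LGraph.labels, LGraph.series]

/-- Characterization of matched strings for wrapping. -/
lemma wrap_matches (G : LGraph V) (s t : V) (P : List Bool) :
    (G.wrap s t).matches' (Sum.inl ()) (Sum.inr (Sum.inr ())) P ↔
      ∃ Q, P = true :: Q ++ [true] ∧ G.matches' s t Q := by
  constructor
  · rintro ⟨p, ⟨-, hc⟩, hh, hl, rfl⟩
    cases p with
    | nil => simp at hh
    | cons x r =>
      simp at hh; subst hh
      cases r with
      | nil => simp [List.getLast?] at hl
      | cons y r' =>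
        obtain ⟨he, hc'⟩ := List.isChain_cons_cons.mp hc
        obtain rfl : y = Sum.inr (Sum.inl s) := by
          rcases y with u | (v | u)
          · exact absurd he id
          · have : v = s := he
            rw [this]
          · exact absurd he id
        have hconf : ∀ (a : V) (w : Unit ⊕ V ⊕ Unit),
            (G.wrap s t).edge (Sum.inr (Sum.inl a)) w →
            (∃ b, w = Sum.inr (Sum.inl b) ∧ G.edge a b) ∨
            (w = Sum.inr (Sum.inr ()) ∧ a = t) := by
          rintro a (u | (b | u)) he'
          · exact absurd he' id
          · exact Or.inl ⟨b, rfl, he'⟩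
          · exact Or.inr ⟨rfl, he'⟩
        rcases confine_exit hconf (Sum.inr (Sum.inl s) :: r') s hc' (by simp) with
            ⟨q, hq, hqc, hqh⟩ | ⟨q, rest, hq, hqc, hqh, hql, hrc, hrh⟩
        · rw [hq] at hl
          rw [getLast?_cons_ne _ (by rcases q with _ | _ <;> simp_all), List.getLast?_map] at hl
          rcases q.getLast? with _ | c <;> simp_all
        · have hrest : rest = [Sum.inr (Sum.inr ())] :=
            chain_noOut hrc hrh (by rintro (u | (b | u)) he' <;> exact absurd he' id)
          subst hrest
          refine ⟨G.labels q, ?_, ⟨q, ⟨?_, hqc⟩, hqh, hql, rfl⟩⟩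
        

          · rw [hq]
            simp [LGraph.labels, LGraph.wrap]
          · rintro rfl; simp at hqh
  · rintro ⟨Q, rfl, ⟨q, ⟨hqne, hqc⟩, hqh, hql, rfl⟩⟩
    refine ⟨Sum.inl () :: (q.map (fun v => Sum.inr (Sum.inl v)) ++ [Sum.inr (Sum.inr ())]),
      ⟨by simp, ?_⟩, rfl, ?_, ?_⟩
    · rw [chain'_iff_isChain, List.isChain_cons]
      constructor
      · intro y hy
        rw [List.head?_append, List.head?_map, hqh] at hy
        simp at hy; subst hy
        exact rfl
      · rw [List.isChain_append]
        refine ⟨by rw [List.isChain_map]; exact hqc, by simp, ?_⟩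
        intro x hx y hy
        rw [List.getLast?_map, hql] at hx
        simp at hx hy; subst hx; subst hy
        exact rfl
    · rw [getLast?_cons_ne _ (by simp), List.getLast?_append]; rfl
    · simp [LGraph.labels, LGraph.wrap]

/-- Characterization of matched strings for parallel composition with
wrapping. -/
lemma parwrap_matches (G1 : LGraph V1) (G2 : LGraph V2) (s1 t1 : V1) (s2 t2 : V2)
    (P : List Bool) :
    (G1.parwrap G2 s1 t1 s2 t2).matches' (Sum.inl ()) (Sum.inr (Sum.inr ())) P ↔
      (∃ Q, P = true :: Q ++ [true] ∧ G1.matches' s1 t1 Q) ∨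
      (∃ Q, P = true :: Q ++ [true] ∧ G2.matches' s2 t2 Q) := by
  constructor
  · rintro ⟨p, ⟨-, hc⟩, hh, hl, rfl⟩
    cases p with
    | nil => simp at hh
    | cons x r =>
      simp at hh; subst hh
      cases r with
      | nil => simp [List.getLast?] at hl
      | cons y r' =>
        obtain ⟨he, hc'⟩ := List.isChain_cons_cons.mp hc
        have hy : y = Sum.inr (Sum.inl (Sum.inl s1)) ∨ y = Sum.inr (Sum.inl (Sum.inr s2)) := by
          rcases y with u | ((b | b) | u)
          · exact absurd he id
          · exact Or.inl (by have : b = s1 := he; rw [this])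
          · exact Or.inr (by have : b = s2 := he; rw [this])
          · exact absurd he id
        rcases hy with rfl | rfl
        · -- left branch
          have hconf : ∀ (a : V1) (w : Unit ⊕ (V1 ⊕ V2) ⊕ Unit),
              (G1.parwrap G2 s1 t1 s2 t2).edge (Sum.inr (Sum.inl (Sum.inl a))) w →
              (∃ b, w = Sum.inr (Sum.inl (Sum.inl b)) ∧ G1.edge a b) ∨
              (w = Sum.inr (Sum.inr ()) ∧ a = t1) := by
            rintro a (u | ((b | b) | u)) he'
            · exact absurd he' id
            · exact Or.inl ⟨b, rfl, he'⟩
            · exact absurd he' id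
            · exact Or.inr ⟨rfl, he'⟩
          rcases confine_exit hconf (Sum.inr (Sum.inl (Sum.inl s1)) :: r') s1 hc' (by simp) with
              ⟨q, hq, hqc, hqh⟩ | ⟨q, rest, hq, hqc, hqh, hql, hrc, hrh⟩
          · rw [hq] at hl
            rw [getLast?_cons_ne _ (by rcases q with _ | _ <;> simp_all), List.getLast?_map] at hl
            rcases q.getLast? with _ | c <;> simp_all
          · have hrest : rest = [Sum.inr (Sum.inr ())] :=
              chain_noOut hrc hrh
                (by rintro (u | ((b | b) | u)) he' <;> exact absurd he' id)
            subst hrest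
            refine Or.inl ⟨G1.labels q, ?_, ⟨q, ⟨?_, hqc⟩, hqh, hql, rfl⟩⟩
            · rw [hq]
              simp [LGraph.labels, LGraph.parwrap]
            · rintro rfl; simp at hqh
        · -- right branch
          have hconf : ∀ (a : V2) (w : Unit ⊕ (V1 ⊕ V2) ⊕ Unit),
              (G1.parwrap G2 s1 t1 s2 t2).edge (Sum.inr (Sum.inl (Sum.inr a))) w →
              (∃ b, w = Sum.inr (Sum.inl (Sum.inr b)) ∧ G2.edge a b) ∨
              (w = Sum.inr (Sum.inr ()) ∧ a = t2) := by
            rintro a (u | ((b | b) | u)) he'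
            · exact absurd he' id
            · exact absurd he' id
            · exact Or.inl ⟨b, rfl, he'⟩
            · exact Or.inr ⟨rfl, he'⟩
          rcases confine_exit hconf (Sum.inr (Sum.inl (Sum.inr s2)) :: r') s2 hc' (by simp) with
              ⟨q, hq, hqc, hqh⟩ | ⟨q, rest, hq, hqc, hqh, hql, hrc, hrh⟩
          · rw [hq] at hl
            rw [getLast?_cons_ne _ (by rcases q with _ | _ <;> simp_all), List.getLast?_map] at hl
            rcases q.getLast? with _ | c <;> simp_all
          · have hrest : rest = [Sum.inr (Sum.inr ())] :=
              chain_noOut hrc hrh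
                (by rintro (u | ((b | b) | u)) he' <;> exact absurd he' id)
            subst hrest
            refine Or.inr ⟨G2.labels q, ?_, ⟨q, ⟨?_, hqc⟩, hqh, hql, rfl⟩⟩
            · rw [hq]
              simp [LGraph.labels, LGraph.parwrap]
            · rintro rfl; simp at hqh
  · rintro (⟨Q, rfl, ⟨q, ⟨hqne, hqc⟩, hqh, hql, rfl⟩⟩ | ⟨Q, rfl, ⟨q, ⟨hqne, hqc⟩, hqh, hql, rfl⟩⟩)
    · refine ⟨Sum.inl () :: (q.map (fun v => Sum.inr (Sum.inl (Sum.inl v))) ++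
        [Sum.inr (Sum.inr ())]), ⟨by simp, ?_⟩, rfl, ?_, ?_⟩
      · rw [chain'_iff_isChain, List.isChain_cons]
        constructor
        · intro y hy
          rw [List.head?_append, List.head?_map, hqh] at hy
          simp at hy; subst hy
          exact rfl
        · rw [List.isChain_append]
          refine ⟨by rw [List.isChain_map]; exact hqc, by simp, ?_⟩
          intro x hx y hy
          rw [List.getLast?_map, hql] at hx
          simp at hx hy; subst hx; subst hy
          exact rfl
      · rw [getLast?_cons_ne _ (by simp), List.getLast?_append]; rfl
      · simp [LGraph.labels, LGraph.parwrap]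
    · refine ⟨Sum.inl () :: (q.map (fun v => Sum.inr (Sum.inl (Sum.inr v))) ++
        [Sum.inr (Sum.inr ())]), ⟨by simp, ?_⟩, rfl, ?_, ?_⟩
      · rw [chain'_iff_isChain, List.isChain_cons]
        constructor
        · intro y hy
          rw [List.head?_append, List.head?_map, hqh] at hy
          simp at hy; subst hy
          exact rfl
        · rw [List.isChain_append]
          refine ⟨by rw [List.isChain_map]; exact hqc, by simp, ?_⟩
          intro x hx y hy
          rw [List.getLast?_map, hql] at hx
          simp at hx hy; subst hx; subst hy
          exact rfl
      · rw [getLast?_cons_ne _ (by simp), List.getLast?_append]; rfl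
      · simp [LGraph.labels, LGraph.parwrap]

/-- The level of a vertex of the universal graph. -/
def lvl (k : ℕ) : UVert k → ℕ
  | Sum.inl _ => 0
  | Sum.inr (Sum.inl p) => p.1.val + 1
  | Sum.inr (Sum.inr _) => k + 1

lemma lvl_step {k : ℕ} {u v : UVert k} (h : Uedge k u v) : lvl k v = lvl k u + 1 := by
  rcases u with u | (p | u) <;> rcases v with v | (q | v) <;>
    simp only [Uedge] at h <;> simp [lvl] <;> omega

/-- Lengths of chains along a relation which increases a potential by 1. -/
lemma chain_len {W : Type} (g : W → ℕ) {R : W → W → Prop}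
    (hg : ∀ u v, R u v → g v = g u + 1) :
    ∀ (p : List W) (u v : W), p.Chain' R → p.head? = some u → p.getLast? = some v →
      g v + 1 = g u + p.length := by
  intro p
  induction p with
  | nil => intro u v _ hh _; simp at hh
  | cons x r ih =>
    intro u v hc hh hl
    simp at hh; subst hh
    cases r with
    | nil => simp at hl; subst hl; simp
    | cons y r' =>
      obtain ⟨he, hc'⟩ := List.isChain_cons_cons.mp hc
      rw [List.getLast?_cons_cons] at hl
      have h1 := ih y v hc' rfl hl
      have h2 := hg _ _ he
      simp only [List.length_cons] at *
      omega

/-- Any string matched by the universal graph has length `k + 2`. -/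
lemma U_len {k : ℕ} {P : List Bool} (h : (UGraph k).matches' (Usrc k) (Usnk k) P) :
    P.length = k + 2 := by
  obtain ⟨p, ⟨-, hc⟩, hh, hl, rfl⟩ := h
  have h1 := chain_len (lvl k) (fun u v h => lvl_step h) p _ _ hc hh hl
  simp only [lvl, Usrc, Usnk, LGraph.labels, List.length_map] at h1 ⊢
  omega

lemma U_aux (k : ℕ) : ∀ (r : List Bool) (j : ℕ), j + r.length = k →
    ∃ q : List (UVert k), q.Chain' (Uedge k) ∧ q.getLast? = some (Usnk k) ∧
      q.map (Ulabel k) = r ++ [true] ∧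
      ((r = [] → q.head? = some (Usnk k)) ∧
       ∀ b r', r = b :: r' → ∀ (hj : j < k),
         q.head? = some (Sum.inr (Sum.inl (⟨j, hj⟩, b)))) := by
  intro r
  induction r with
  | nil =>
    intro j hj
    exact ⟨[Usnk k], by simp, by simp, by simp [Ulabel, Usnk], fun _ => rfl, by simp⟩
  | cons b r' ih =>
    intro j hj
    simp only [List.length_cons] at hj
    have hjk : j < k := by omega
    obtain ⟨q, hc, hl, hm, hnil, hcons⟩ := ih (j + 1) (by omega)
    refine ⟨Sum.inr (Sum.inl (⟨j, hjk⟩, b)) :: q, ?_, ?_, by simp [Ulabel, hm], by simp, ?_⟩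
    · rw [chain'_iff_isChain, List.isChain_cons]
      refine ⟨?_, hc⟩
      intro y hy
      cases r' with
      | nil =>
        rw [hnil rfl] at hy
        simp at hy; subst hy
        show j + 1 = k
        simp at hj; omega
      | cons b' r'' =>
        have hj1 : j + 1 < k := by simp at hj ⊢; omega
        rw [hcons b' r'' rfl hj1] at hy
        simp at hy; subst hy
        show j + 1 = j + 1
        rfl
    · rw [getLast?_cons_ne]
      · exact hl
      · intro h; rw [h] at hm; simp at hm
    · intro b0 r0 he hjlt
      injection he with h1 h2
      subst h1
      rfl

lemma U_matches (w : List Bool) {k : ℕ} (hw : w.length = k) :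
    (UGraph k).matches' (Usrc k) (Usnk k) (true :: w ++ [true]) := by
  subst hw
  cases w with
  | nil =>
    refine ⟨[Usrc 0, Usnk 0], ⟨by simp, ?_⟩, rfl, rfl, rfl⟩
    refine List.isChain_cons_cons.mpr ⟨?_, by simp⟩
    show (0 : ℕ) = 0
    rfl
  | cons b w' =>
    obtain ⟨q, hc, hl, hm, -, hcons⟩ :=
      U_aux (b :: w').length (b :: w') 0 (by omega)
    have hq0 := hcons b w' rfl (by simp)
    refine ⟨Usrc _ :: q, ⟨by simp, ?_⟩, rfl, ?_, ?_⟩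
    · rw [chain'_iff_isChain, List.isChain_cons]
      refine ⟨?_, hc⟩
      intro y hy
      rw [hq0] at hy
      simp at hy; subst hy
      show (0 : ℕ) = 0
      rfl
    · rw [getLast?_cons_ne]
      · exact hl
      · intro h; rw [h] at hm; simp at hm
    · show List.map _ _ = _
      simp only [List.map_cons]
      rw [show List.map (UGraph (b :: w').length).label q = q.map (Ulabel _) from rfl, hm]
      rfl

/-- Matched strings of the 3-vertex path graph. -/
lemma path3_matches (l0 l1 l2 : Bool) (P : List Bool) :
    (path3 l0 l1 l2).matches' 0 2 P ↔ P = [l0, l1, l2] := by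
  constructor
  · rintro ⟨p, ⟨-, hc⟩, hh, hl, rfl⟩
    have hlen := chain_len (fun v : Fin 3 => v.val) (fun u v h => h) p _ _ hc hh hl
    have h3 : p.length = 3 := by
      have h2 : ((2 : Fin 3) : ℕ) = 2 := rfl
      have h0 : ((0 : Fin 3) : ℕ) = 0 := rfl
      simp only [h2, h0] at hlen
      omega
    obtain ⟨x, y, z, rfl⟩ := List.length_eq_three.mp h3
    simp only [List.head?_cons, Option.some_inj] at hh
    subst hh
    obtain ⟨he1, he2, -⟩ := List.isChain_cons_cons.mp hc |>.imp id (List.isChain_cons_cons.mp ·)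
    have hx : ((0 : Fin 3) : ℕ) = 0 := rfl
    have hy : (y : ℕ) = 1 := by rw [he1, hx]
    have hz : (z : ℕ) = 2 := by rw [he2, hy]
    simp only [LGraph.labels, path3, List.map_cons, List.map_nil, hx, hy, hz]
    simp
  · rintro rfl
    refine ⟨[0, 1, 2], ⟨by simp, ?_⟩, rfl, rfl, ?_⟩
    · refine List.isChain_cons_cons.mpr ⟨rfl, List.isChain_cons_cons.mpr ⟨rfl, by simp⟩⟩
    · show [_, _, _] = _
      simp [path3]

lemma pat_length {m : ℕ} (a : Fin m → Bool) : ∀ g : Gate m, (g.pat a).length = g.plen := by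
  intro g
  induction g <;> simp_all [Gate.pat, Gate.plen] <;> omega

lemma plen_ge {m : ℕ} : ∀ g : Gate m, 2 ≤ g.plen := by
  intro g
  induction g <;> simp [Gate.plen]

lemma pat_form {m : ℕ} (a : Fin m → Bool) (g : Gate m) :
    ∃ mid : List Bool, g.pat a = true :: mid ++ [true] ∧ mid.length + 2 = g.plen := by
  cases g with
  | avar i => exact ⟨[a i], rfl, rfl⟩
  | bvar j => exact ⟨[true], rfl, rfl⟩
  | and g1 g2 =>
    refine ⟨g1.pat a ++ g2.pat a, by simp [Gate.pat], ?_⟩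
    simp [pat_length, Gate.plen]
  | or g1 g2 =>
    refine ⟨g1.pat a ++ g2.pat a, by simp [Gate.pat], ?_⟩
    simp [pat_length, Gate.plen]

/-- Combined induction: length rigidity and correctness. -/
lemma build_key {m : ℕ} (a b : Fin m → Bool) : ∀ g : Gate m,
    (∀ L, (build b g).G.matches' (build b g).src (build b g).snk L → L.length = g.plen) ∧
    ((build b g).G.matches' (build b g).src (build b g).snk (g.pat a) ↔ g.eval a b = true) := by
  intro g
  induction g with
  | avar i =>
    constructor
    · intro L hL
      rw [show ((build b (Gate.avar i)).G.matches' (build b (Gate.avar i)).src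
          (build b (Gate.avar i)).snk L) = ((path3 true true true).matches' 0 2 L) from rfl,
        path3_matches] at hL
      subst hL; rfl
    · rw [show ((build b (Gate.avar i)).G.matches' (build b (Gate.avar i)).src
          (build b (Gate.avar i)).snk (Gate.pat a (Gate.avar i))) =
          ((path3 true true true).matches' 0 2 [true, a i, true]) from rfl, path3_matches]
      show [true, a i, true] = [true, true, true] ↔ a i = true
      simp
  | bvar j =>
    constructor
    · intro L hL
      rw [show ((build b (Gate.bvar j)).G.matches' (build b (Gate.bvar j)).src
          (build b (Gate.bvar j)).snk L) = ((path3 true (b j) true).matches' 0 2 L) from rfl,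
        path3_matches] at hL
      subst hL; rfl
    · rw [show ((build b (Gate.bvar j)).G.matches' (build b (Gate.bvar j)).src
          (build b (Gate.bvar j)).snk (Gate.pat a (Gate.bvar j))) =
          ((path3 true (b j) true).matches' 0 2 [true, true, true]) from rfl, path3_matches]
      show [true, true, true] = [true, b j, true] ↔ b j = true
      constructor
      · intro h
        exact ((List.cons.inj ((List.cons.inj h).2)).1).symm
      · intro h
        rw [h]
  | and g1 g2 ih1 ih2 =>
    have hkey : ∀ L, (build b (g1.and g2)).G.matches' (build b (g1.and g2)).src
        (build b (g1.and g2)).snk L ↔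
        ∃ Q1 Q2, L = true :: (Q1 ++ Q2) ++ [true] ∧
          (build b g1).G.matches' (build b g1).src (build b g1).snk Q1 ∧
          (build b g2).G.matches' (build b g2).src (build b g2).snk Q2 := by
      intro L
      rw [show ((build b (g1.and g2)).G.matches' (build b (g1.and g2)).src
          (build b (g1.and g2)).snk L) =
          ((((build b g1).G.series (build b g2).G (build b g1).snk (build b g2).src).wrap
            (Sum.inl (build b g1).src) (Sum.inr (build b g2).snk)).matches'
            (Sum.inl ()) (Sum.inr (Sum.inr ())) L) from rfl]
      rw [wrap_matches]
      simp only [series_matches]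
      constructor
      · rintro ⟨Q, rfl, Q1, Q2, rfl, h1, h2⟩
        exact ⟨Q1, Q2, rfl, h1, h2⟩
      · rintro ⟨Q1, Q2, rfl, h1, h2⟩
        exact ⟨Q1 ++ Q2, rfl, Q1, Q2, rfl, h1, h2⟩
    constructor
    · intro L hL
      obtain ⟨Q1, Q2, rfl, h1, h2⟩ := (hkey L).mp hL
      have e1 := ih1.1 _ h1
      have e2 := ih2.1 _ h2
      simp [Gate.plen, e1, e2]
      omega
    · rw [hkey]
      constructor
      · rintro ⟨Q1, Q2, hQ, h1, h2⟩
        have hpat : (g1.and g2).pat a = true :: (g1.pat a ++ g2.pat a) ++ [true] := by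
          simp [Gate.pat]
        have hcan : g1.pat a ++ g2.pat a = Q1 ++ Q2 := by
          have h' : (true : Bool) :: (g1.pat a ++ g2.pat a) ++ [true] =
              true :: (Q1 ++ Q2) ++ [true] := by rw [← hpat, hQ]
          exact List.append_cancel_right (List.cons.inj h').2
        obtain ⟨hq1, hq2⟩ := List.append_inj hcan
          (by rw [pat_length, ih1.1 _ h1])
        subst hq1; subst hq2
        have := ih1.2.mp h1
        have := ih2.2.mp h2
        simp_all [Gate.eval]
      · intro hev
        simp only [Gate.eval, Bool.and_eq_true] at hev
        refine ⟨g1.pat a, g2.pat a, by simp [Gate.pat], ih1.2.mpr hev.1, ih2.2.mpr hev.2⟩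
  | or g1 g2 ih1 ih2 =>
    have hkey : ∀ L, (build b (g1.or g2)).G.matches' (build b (g1.or g2)).src
        (build b (g1.or g2)).snk L ↔
        (∃ Q1 Q2, L = true :: (Q1 ++ Q2) ++ [true] ∧
          (build b g1).G.matches' (build b g1).src (build b g1).snk Q1 ∧
          (UGraph (g2.plen - 2)).matches' (Usrc _) (Usnk _) Q2) ∨
        (∃ Q1 Q2, L = true :: (Q1 ++ Q2) ++ [true] ∧
          (UGraph (g1.plen - 2)).matches' (Usrc _) (Usnk _) Q1 ∧
          (build b g2).G.matches' (build b g2).src (build b g2).snk Q2) := by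
      intro L
      rw [show ((build b (g1.or g2)).G.matches' (build b (g1.or g2)).src
          (build b (g1.or g2)).snk L) =
          ((((build b g1).G.series (UGraph (g2.plen - 2)) (build b g1).snk
              (Usrc (g2.plen - 2))).parwrap
            ((UGraph (g1.plen - 2)).series (build b g2).G (Usnk (g1.plen - 2))
              (build b g2).src)
            (Sum.inl (build b g1).src) (Sum.inr (Usnk (g2.plen - 2)))
            (Sum.inl (Usrc (g1.plen - 2))) (Sum.inr (build b g2).snk)).matches'
            (Sum.inl ()) (Sum.inr (Sum.inr ())) L) from rfl]
      rw [parwrap_matches]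
      simp only [series_matches]
      constructor
      · rintro (⟨Q, rfl, Q1, Q2, rfl, h1, h2⟩ | ⟨Q, rfl, Q1, Q2, rfl, h1, h2⟩)
        · exact Or.inl ⟨Q1, Q2, rfl, h1, h2⟩
        · exact Or.inr ⟨Q1, Q2, rfl, h1, h2⟩
      · rintro (⟨Q1, Q2, rfl, h1, h2⟩ | ⟨Q1, Q2, rfl, h1, h2⟩)
        · exact Or.inl ⟨Q1 ++ Q2, rfl, Q1, Q2, rfl, h1, h2⟩
        · exact Or.inr ⟨Q1 ++ Q2, rfl, Q1, Q2, rfl, h1, h2⟩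
    have hp1 : 2 ≤ g1.plen := plen_ge g1
    have hp2 : 2 ≤ g2.plen := plen_ge g2
    constructor
    · intro L hL
      rcases (hkey L).mp hL with ⟨Q1, Q2, rfl, h1, h2⟩ | ⟨Q1, Q2, rfl, h1, h2⟩
      · have e1 := ih1.1 _ h1
        have e2 := U_len h2
        simp [Gate.plen, e1, e2]
        omega
      · have e1 := U_len h1
        have e2 := ih2.1 _ h2
        simp [Gate.plen, e1, e2]
        omega
    · rw [hkey]
      have hpat : (g1.or g2).pat a = true :: (g1.pat a ++ g2.pat a) ++ [true] := by
        simp [Gate.pat]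
      constructor
      · rintro (⟨Q1, Q2, hQ, h1, h2⟩ | ⟨Q1, Q2, hQ, h1, h2⟩)
        · have hcan : g1.pat a ++ g2.pat a = Q1 ++ Q2 := by
            have h' : (true : Bool) :: (g1.pat a ++ g2.pat a) ++ [true] =
                true :: (Q1 ++ Q2) ++ [true] := by rw [← hpat, hQ]
            exact List.append_cancel_right (List.cons.inj h').2
          obtain ⟨hq1, hq2⟩ := List.append_inj hcan
            (by rw [pat_length, ih1.1 _ h1])
          subst hq1
          have := ih1.2.mp h1
          simp_all [Gate.eval]
        · have hcan : g1.pat a ++ g2.pat a = Q1 ++ Q2 := by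
            have h' : (true : Bool) :: (g1.pat a ++ g2.pat a) ++ [true] =
                true :: (Q1 ++ Q2) ++ [true] := by rw [← hpat, hQ]
            exact List.append_cancel_right (List.cons.inj h').2
          obtain ⟨hq1, hq2⟩ := List.append_inj hcan
            (by rw [pat_length, U_len h1]; omega)
          subst hq2
          have := ih2.2.mp h2
          simp_all [Gate.eval]
      · intro hev
        simp only [Gate.eval, Bool.or_eq_true] at hev
        rcases hev with hev | hev
        · refine Or.inl ⟨g1.pat a, g2.pat a, by simp [Gate.pat], ih1.2.mpr hev, ?_⟩
          obtain ⟨mid, hmid, hlen⟩ := pat_form a g2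
          rw [hmid]
          exact U_matches mid (by omega)
        · refine Or.inr ⟨g1.pat a, g2.pat a, by simp [Gate.pat], ?_, ih2.2.mpr hev⟩
          obtain ⟨mid, hmid, hlen⟩ := pat_form a g1
          rw [hmid]
          exact U_matches mid (by omega)

end Aux

/-- Main correctness of the PMLG gadget construction: the pattern `P_a(F)`
(built from `a` and the formula alone) is matched by some source-to-sink
path of the graph `G_b(F)` (built from `b` and the formula alone) iff
`F(a, b) = 1`. -/
theorem stmt_10 (m : ℕ) (F : Gate m) (a b : Fin m → Bool) :
    (build b F).G.matches' (build b F).src (build b F).snk (F.pat a) ↔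
      F.eval a b = true :=
  (build_key a b F).2
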